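/- Let β > 1 and let (ε_1,…,ε_n) be a β-admissible word. If the cylinder I_n(ε_1,…,ε_n) is full, then for any β-admissible word (η_1,…,η_m), the concatenation (ε_1,…,ε_n,η_1,…,η_m) is β-admissible and |I_{n+m}(ε_1,…,ε_n,η_1,…,η_m)| = |I_n(ε_1,…,ε_n)| · |I_m(η_1,…,η_m)|. -/

import Mathlib

open Filter MeasureTheory Set

/-- The β-transformation `T_β(x) = βx - ⌊βx⌋`. -/
noncomputable def betaT (β x : ℝ) : ℝ := Int.fract (β * x)

/-- The `(n+1)`-st digit of the β-expansion of `x` (0-indexed):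
`betaDigit β x n = ⌊β ⬝ T_β^n(x)⌋`. -/
noncomputable def betaDigit (β x : ℝ) (n : ℕ) : ℕ := (⌊β * (betaT β)^[n] x⌋).toNat

/-- The set `Σ_β^n` of β-admissible words of length `n`. -/
def admissibleWords (β : ℝ) (n : ℕ) : Set (Fin n → ℕ) :=
  {w | ∃ x ∈ Set.Ico (0:ℝ) 1, ∀ i : Fin n, betaDigit β x i = w i}

/-- The set `Σ_β` of β-admissible digit sequences. -/
def admissibleSeqs (β : ℝ) : Set (ℕ → ℕ) :=
  {e | ∃ x ∈ Set.Ico (0:ℝ) 1, ∀ i, betaDigit β x i = e i}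

/-- The cylinder `I_n(w)` of a word `w`. -/
def cylinder (β : ℝ) {n : ℕ} (w : Fin n → ℕ) : Set ℝ :=
  {x | x ∈ Set.Ico (0:ℝ) 1 ∧ ∀ i : Fin n, betaDigit β x i = w i}

/-- The partial digit sum `S_n(x,β)`. -/
noncomputable def Sdig (β x : ℝ) (n : ℕ) : ℝ := ∑ i ∈ Finset.range n, (betaDigit β x i : ℝ)

namespace BetaAux

noncomputable def pS (β : ℝ) (e : ℕ → ℕ) : ℕ → ℝ
  | 0 => 0
  | k+1 => β * pS β e k + e k

def extw {n : ℕ} (w : Fin n → ℕ) : ℕ → ℕ := fun i => if h : i < n then w ⟨i, h⟩ else 0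

lemma iter_mem {β x : ℝ} (hx : x ∈ Set.Ico (0:ℝ) 1) (n : ℕ) :
    (betaT β)^[n] x ∈ Set.Ico (0:ℝ) 1 := by
  cases n with
  | zero => simpa
  | succ n =>
    rw [Function.iterate_succ_apply']
    exact ⟨Int.fract_nonneg _, Int.fract_lt_one _⟩

lemma iter_eq {β : ℝ} (hβ : 1 < β) (e : ℕ → ℕ) {x : ℝ} (hx : x ∈ Set.Ico (0:ℝ) 1) :
    ∀ n, (∀ i < n, betaDigit β x i = e i) →
      (betaT β)^[n] x = β ^ n * x - pS β e n := by
  intro n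
  induction n with
  | zero => intro _; simp [pS]
  | succ n ih =>
    intro h
    have ihn := ih (fun i hi => h i (Nat.lt_succ_of_lt hi))
    have hmem := iter_mem (β := β) hx n
    have hnn : (0:ℝ) ≤ β * (betaT β)^[n] x :=
      mul_nonneg (le_of_lt (lt_trans one_pos hβ)) hmem.1
    have hd : (⌊β * (betaT β)^[n] x⌋).toNat = e n := h n (Nat.lt_succ_self n)
    have h0 : (0:ℤ) ≤ ⌊β * (betaT β)^[n] x⌋ := Int.floor_nonneg.mpr hnn
    have hZ : ⌊β * (betaT β)^[n] x⌋ = (e n : ℤ) := by omega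
    have hfl : ((⌊β * (betaT β)^[n] x⌋ : ℤ) : ℝ) = (e n : ℝ) := by exact_mod_cast hZ
    calc (betaT β)^[n+1] x = β * (betaT β)^[n] x - ⌊β * (betaT β)^[n] x⌋ := by
          rw [Function.iterate_succ_apply', betaT, Int.fract]
      _ = β * (β ^ n * x - pS β e n) - (e n : ℝ) := by rw [hfl, ihn]
      _ = β ^ (n+1) * x - pS β e (n+1) := by simp only [pS]; ring

lemma char_fwd {β : ℝ} (hβ : 1 < β) (e : ℕ → ℕ) {x : ℝ} (hx : x ∈ Set.Ico (0:ℝ) 1)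
    (n : ℕ) (h : ∀ i < n, betaDigit β x i = e i) :
    ∀ k ≤ n, β ^ k * x - pS β e k ∈ Set.Ico (0:ℝ) 1 := fun k hk => by
  rw [← iter_eq hβ e hx k (fun i hi => h i (hi.trans_le hk))]
  exact iter_mem hx k

lemma char_bwd {β : ℝ} (hβ : 1 < β) (e : ℕ → ℕ) {x : ℝ} (hx : x ∈ Set.Ico (0:ℝ) 1)
    (n : ℕ) (h : ∀ k ≤ n, β ^ k * x - pS β e k ∈ Set.Ico (0:ℝ) 1) :
    ∀ i < n, betaDigit β x i = e i := by
  intro i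
  induction i using Nat.strong_induction_on with
  | _ i ih =>
    intro hin
    have heq : (betaT β)^[i] x = β ^ i * x - pS β e i :=
      iter_eq hβ e hx i (fun j hj => ih j hj (hj.trans hin))
    have h1 := h (i+1) hin
    have hkey : β * (β ^ i * x - pS β e i) = (β ^ (i+1) * x - pS β e (i+1)) + (e i : ℝ) := by
      simp only [pS]; push_cast; ring
    show (⌊β * (betaT β)^[i] x⌋).toNat = e i
    rw [heq, hkey]
    have hz : ⌊β ^ (i+1) * x - pS β e (i+1)⌋ = 0 := Int.floor_eq_zero_iff.mpr (by simpa using h1)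
    have : ⌊(β ^ (i+1) * x - pS β e (i+1)) + (e i : ℝ)⌋ = (e i : ℤ) := by
      rw [Int.floor_add_natCast, hz, zero_add]
    rw [this]
    simp

lemma cyl_eq {β : ℝ} (hβ : 1 < β) {n : ℕ} (w : Fin n → ℕ) :
    cylinder β w = {x : ℝ | ∀ k ≤ n, β ^ k * x - pS β (extw w) k ∈ Set.Ico (0:ℝ) 1} := by
  ext x
  constructor
  · rintro ⟨hx, hd⟩
    exact char_fwd hβ (extw w) hx n (fun i hi => by simpa [extw, hi] using hd ⟨i, hi⟩)
  · intro h
    have hx : x ∈ Set.Ico (0:ℝ) 1 := by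
      have := h 0 (Nat.zero_le n); simpa [pS] using this
    refine ⟨hx, fun i => ?_⟩
    have := char_bwd hβ (extw w) hx n h i i.isLt
    simpa [extw, i.isLt] using this

lemma setIco {β : ℝ} (hβ0 : 0 < β) (e : ℕ → ℕ) (n : ℕ) :
    {x : ℝ | ∀ k ≤ n, β ^ k * x - pS β e k ∈ Set.Ico (0:ℝ) 1}
      = Set.Ico ((Finset.range (n+1)).sup' Finset.nonempty_range_add_one fun k => pS β e k / β ^ k)
        ((Finset.range (n+1)).inf' Finset.nonempty_range_add_one fun k => (pS β e k + 1) / β ^ k) := by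
  ext x
  simp only [Set.mem_setOf_eq, Set.mem_Ico, Finset.sup'_le_iff, Finset.lt_inf'_iff,
    Finset.mem_range, Nat.lt_succ_iff]
  constructor
  · intro h
    refine ⟨fun k hk => ?_, fun k hk => ?_⟩
    · rw [div_le_iff₀ (pow_pos hβ0 k)]
      have := (h k hk).1
      linarith [mul_comm x (β ^ k)]
    · rw [lt_div_iff₀ (pow_pos hβ0 k)]
      have := (h k hk).2
      linarith [mul_comm x (β ^ k)]
  · rintro ⟨h1, h2⟩ k hk
    have a1 := h1 k hk; rw [div_le_iff₀ (pow_pos hβ0 k)] at a1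
    have a2 := h2 k hk; rw [lt_div_iff₀ (pow_pos hβ0 k)] at a2
    exact ⟨by linarith [mul_comm x (β ^ k)], by linarith [mul_comm x (β ^ k)]⟩

lemma cyl_append (β : ℝ) {n m : ℕ} (w : Fin n → ℕ) (v : Fin m → ℕ) (x : ℝ) :
    x ∈ cylinder β (Fin.append w v) ↔
      x ∈ cylinder β w ∧ (betaT β)^[n] x ∈ cylinder β v := by
  constructor
  · rintro ⟨hx, hd⟩
    refine ⟨⟨hx, fun i => ?_⟩, iter_mem hx n, fun j => ?_⟩
    · have := hd (Fin.castAdd m i)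
      rw [Fin.append_left] at this
      simpa using this
    · have := hd (Fin.natAdd n j)
      rw [Fin.append_right] at this
      show (⌊β * (betaT β)^[(j : ℕ)] ((betaT β)^[n] x)⌋).toNat = v j
      rw [← Function.iterate_add_apply]
      simpa [betaDigit, Nat.add_comm] using this
  · rintro ⟨⟨hx, hdw⟩, hT, hdv⟩
    refine ⟨hx, fun i => ?_⟩
    refine Fin.addCases (fun i => ?_) (fun j => ?_) i
    · rw [Fin.append_left]
      simpa using hdw i
    · rw [Fin.append_right]
      have := hdv j
      show (⌊β * (betaT β)^[((Fin.natAdd n j : Fin (n+m)) : ℕ)] x⌋).toNat = v j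
      have hc : ((Fin.natAdd n j : Fin (n+m)) : ℕ) = (j : ℕ) + n := by
        simp [Nat.add_comm]
      rw [hc, Function.iterate_add_apply]
      simpa [betaDigit] using this

end BetaAux

open BetaAux

/-- If `I_n(ε_1,…,ε_n)` is full, then for any admissible word `(η_1,…,η_m)` the
concatenation is admissible and `|I_{n+m}(ε∗η)| = |I_n(ε)|⋅|I_m(η)|`. -/
theorem stmt7 (β : ℝ) (hβ : 1 < β) {n m : ℕ} (w : Fin n → ℕ) (v : Fin m → ℕ)
    (hw : w ∈ admissibleWords β n) (hv : v ∈ admissibleWords β m)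
    (hwfull : volume (cylinder β w) = ENNReal.ofReal ((β ^ n)⁻¹)) :
    Fin.append w v ∈ admissibleWords β (n + m) ∧
    volume (cylinder β (Fin.append w v)) =
      volume (cylinder β w) * volume (cylinder β v) := by
  have hβ0 : (0:ℝ) < β := one_pos.trans hβ
  have hpow : (0:ℝ) < β ^ n := pow_pos hβ0 n
  set p : ℝ := pS β (extw w) n with hp
  set a : ℝ := p / β ^ n with ha
  obtain ⟨c, d, hcv⟩ : ∃ c d : ℝ, cylinder β v = Set.Ico c d :=
    ⟨_, _, (cyl_eq hβ v).trans (setIco hβ0 (extw v) m)⟩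
  obtain ⟨A, B, hcw, hA, hB⟩ : ∃ A B : ℝ, cylinder β w = Set.Ico A B ∧
      a ≤ A ∧ B ≤ (p + 1) / β ^ n := by
    refine ⟨_, _, (cyl_eq hβ w).trans (setIco hβ0 (extw w) n), ?_, ?_⟩
    · exact Finset.le_sup' (fun k => pS β (extw w) k / β ^ k) (Finset.self_mem_range_succ n)
    · exact Finset.inf'_le (fun k => (pS β (extw w) k + 1) / β ^ k) (Finset.self_mem_range_succ n)
  obtain ⟨x0, hx0, hd0⟩ := hw
  have hx0c : x0 ∈ Set.Ico A B := by rw [← hcw]; exact ⟨hx0, hd0⟩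
  have hABlt : A < B := lt_of_le_of_lt hx0c.1 hx0c.2
  rw [hcw, Real.volume_Ico] at hwfull
  have hBA : B - A = (β ^ n)⁻¹ :=
    (ENNReal.ofReal_eq_ofReal_iff (by linarith) (by positivity)).mp hwfull
  have hsplit : (p + 1) / β ^ n = a + (β ^ n)⁻¹ := by rw [ha, add_div, one_div]
  have hAa : A = a := by linarith
  have hBb : B = a + (β ^ n)⁻¹ := by linarith
  have hap : a * β ^ n = p := div_mul_cancel₀ p hpow.ne'
  have haff1 : ∀ c' x : ℝ, a + c' / β ^ n ≤ x ↔ c' ≤ β ^ n * x - p := by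
    intro c' x
    constructor
    · intro h
      have h2 : c' / β ^ n ≤ x - a := by linarith
      have h3 := (div_le_iff₀ hpow).mp h2
      nlinarith
    · intro h
      have h2 : c' ≤ (x - a) * β ^ n := by nlinarith
      have h3 := (div_le_iff₀ hpow).mpr h2
      linarith
  have haff2 : ∀ d' x : ℝ, x < a + d' / β ^ n ↔ β ^ n * x - p < d' := by
    intro d' x
    constructor
    · intro h
      have h2 : x - a < d' / β ^ n := by linarith
      have h3 := (lt_div_iff₀ hpow).mp h2
      nlinarith
    · intro h
      have h2 : (x - a) * β ^ n < d' := by nlinarith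
      have h3 := (lt_div_iff₀ hpow).mpr h2
      linarith
  have hIco : ∀ c' d' : ℝ, Set.Ico (a + c' / β ^ n) (a + d' / β ^ n)
      = {x : ℝ | β ^ n * x - p ∈ Set.Ico c' d'} := by
    intro c' d'
    ext x
    simp only [Set.mem_Ico, Set.mem_setOf_eq]
    rw [haff1, haff2]
  have hcw2 : cylinder β w = {x : ℝ | β ^ n * x - p ∈ Set.Ico (0:ℝ) 1} := by
    rw [hcw, hAa, hBb, ← hIco 0 1]
    norm_num
  have hTn : ∀ x, x ∈ cylinder β w → (betaT β)^[n] x = β ^ n * x - p := by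
    intro x hx
    exact iter_eq hβ (extw w) hx.1 n (fun i hi => by simpa [extw, hi] using hx.2 ⟨i, hi⟩)
  have hsub : Set.Ico c d ⊆ Set.Ico (0:ℝ) 1 := by
    rw [← hcv]; exact fun x hx => hx.1
  have hfinal : cylinder β (Fin.append w v) = Set.Ico (a + c / β ^ n) (a + d / β ^ n) := by
    rw [hIco]
    ext x
    rw [Set.mem_setOf_eq, cyl_append]
    constructor
    · rintro ⟨hxw, hxv⟩
      rw [← hTn x hxw]
      exact hcv ▸ hxv
    · intro hx
      have hx01 : β ^ n * x - p ∈ Set.Ico (0:ℝ) 1 := hsub hx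
      have hxw : x ∈ cylinder β w := by rw [hcw2]; exact hx01
      refine ⟨hxw, ?_⟩
      rw [hcv, hTn x hxw]
      exact hx
  constructor
  · obtain ⟨y, hy, hyd⟩ := hv
    have hyc : y ∈ Set.Ico c d := by rw [← hcv]; exact ⟨hy, hyd⟩
    have hxmem : a + y / β ^ n ∈ cylinder β (Fin.append w v) := by
      rw [hfinal]
      constructor
      · have := hyc.1; gcongr
      · have := hyc.2; gcongr
    exact ⟨a + y / β ^ n, hxmem.1, hxmem.2⟩
  · rw [hfinal, hcv, hcw, Real.volume_Ico, Real.volume_Ico, Real.volume_Ico, hBA]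
    rw [← ENNReal.ofReal_mul (by positivity : (0:ℝ) ≤ (β ^ n)⁻¹)]
    congr 1
    ring
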